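/- Let {Ω_i}_{i∈ℕ} be a countable system of closed sets in ℝⁿ and x̄ ∈ Ω := ∩_{i=1}^∞ Ω_i. Assume the system has the CHIP at x̄ (T(x̄;Ω) = ∩_{i=1}^∞ T(x̄;Ω_i)) and satisfies the NQC at x̄ (whenever x*_i ∈ N(x̄;Ω_i) for all i and Σ_{i=1}^∞ x*_i converges to 0, then all x*_i = 0). Then N̂(x̄;Ω) ⊆ cl{Σ_{i∈I} x*_i | x*_i ∈ N(x̄;Ω_i), I a finite subset of ℕ}. If in addition the set {Σ_{i∈I} x*_i | x*_i ∈ N(x̄;Ω_i), I a finite subset of ℕ} is closed in ℝⁿ (the NCC), then the closure operation can be omitted. -/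

import Mathlib

open Filter Topology Set Metric

section Defs
variable {E : Type*} [NormedAddCommGroup E] [NormedSpace ℝ E]

/-- Bouligand–Severi contingent tangent cone. -/
def tcone (Ω : Set E) (x : E) : Set E :=
  {v | ∃ (t : ℕ → ℝ) (w : ℕ → E), (∀ k, 0 < t k) ∧
    Tendsto t atTop (nhds 0) ∧ Tendsto w atTop (nhds v) ∧ ∀ k, x + t k • w k ∈ Ω}
end Defs

section Defs2
variable {E F : Type*} [NormedAddCommGroup E] [InnerProductSpace ℝ E]
  [NormedAddCommGroup F] [InnerProductSpace ℝ F]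

/-- Fréchet (regular/pre-) normal cone. -/
def fnormal (Ω : Set E) (x : E) : Set E :=
  {v | ∀ ε > 0, ∃ δ > 0, ∀ u ∈ Ω, ‖u - x‖ < δ → (inner ℝ v (u - x) : ℝ) ≤ ε * ‖u - x‖}

/-- Limiting (Mordukhovich) normal cone. -/
def lnormal (Ω : Set E) (x : E) : Set E :=
  {v | ∃ xk vk : ℕ → E, (∀ k, xk k ∈ Ω) ∧ (∀ k, vk k ∈ fnormal Ω (xk k)) ∧
    Tendsto xk atTop (nhds x) ∧ Tendsto vk atTop (nhds v)}

/-- Normal cone of convex analysis. -/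
def cnormal (Ω : Set E) (x : E) : Set E :=
  {v | ∀ y ∈ Ω, (inner ℝ v (y - x) : ℝ) ≤ 0}

/-- All finite sums `∑_{i ∈ I} xᵢ` with `xᵢ ∈ Nc i`. -/
def finSums (Nc : ℕ → Set E) : Set E :=
  {v | ∃ (I : Finset ℕ) (xs : ℕ → E), (∀ i ∈ I, xs i ∈ Nc i) ∧ v = ∑ i ∈ I, xs i}

/-- Fréchet normal cone in a product of inner ℝ product spaces
(equivalently, w.r.t. the Euclidean product structure). -/
def fnormalP (Ω : Set (E × F)) (z : E × F) : Set (E × F) :=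
  {v | ∀ ε > 0, ∃ δ > 0, ∀ u ∈ Ω, ‖u - z‖ < δ →
    (inner ℝ v.1 (u.1 - z.1) : ℝ) + (inner ℝ v.2 (u.2 - z.2) : ℝ) ≤ ε * ‖u - z‖}

/-- Limiting normal cone in a product of inner ℝ product spaces. -/
def lnormalP (Ω : Set (E × F)) (z : E × F) : Set (E × F) :=
  {v | ∃ zk vk : ℕ → E × F, (∀ k, zk k ∈ Ω) ∧ (∀ k, vk k ∈ fnormalP Ω (zk k)) ∧
    Tendsto zk atTop (nhds z) ∧ Tendsto vk atTop (nhds v)}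

/-- Epigraph of an extended-real-valued function. -/
def epiSet (φ : E → EReal) : Set (E × ℝ) := {p | φ p.1 ≤ (p.2 : EReal)}

/-- Basic (limiting, Mordukhovich) subdifferential. -/
noncomputable def bsub (φ : E → EReal) (x : E) : Set E :=
  {v | (v, (-1 : ℝ)) ∈ lnormalP (epiSet φ) (x, (φ x).toReal)}

/-- Singular subdifferential. -/
noncomputable def ssub (φ : E → EReal) (x : E) : Set E :=
  {v | (v, (0 : ℝ)) ∈ lnormalP (epiSet φ) (x, (φ x).toReal)}

/-- Fréchet subdifferential. -/
def fsub (φ : E → EReal) (x : E) : Set E :=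
  {v | ∀ ε > 0, ∃ δ > 0, ∀ u, ‖u - x‖ < δ →
    φ x + (((inner ℝ v (u - x) : ℝ) - ε * ‖u - x‖ : ℝ) : EReal) ≤ φ u}

/-- Fréchet upper subdifferential `∂̂⁺φ(x) = −∂̂(−φ)(x)`. -/
def fsubUpper (φ : E → EReal) (x : E) : Set E := {v | -v ∈ fsub (fun u => -(φ u)) x}
end Defs2

section Lemmas
variable {H : Type*} [NormedAddCommGroup H] [InnerProductSpace ℝ H]

lemma zero_mem_fnormal (Ω : Set H) (x : H) : (0:H) ∈ fnormal Ω x := by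
  intro ε hε
  exact ⟨1, one_pos, fun u _ _ => by simp [inner_zero_left]; positivity⟩

lemma fnormal_smul {Ω : Set H} {x v : H} (c : ℝ) (hc : 0 ≤ c)
    (hv : v ∈ fnormal Ω x) : c • v ∈ fnormal Ω x := by
  rcases eq_or_lt_of_le hc with h | h
  · rw [← h, zero_smul]; exact zero_mem_fnormal Ω x
  · intro ε hε
    obtain ⟨δ, hδ, hb⟩ := hv (ε / c) (by positivity)
    refine ⟨δ, hδ, fun u hu hd => ?_⟩
    have := hb u hu hd
    rw [real_inner_smul_left]
    calc c * (inner ℝ v (u - x) : ℝ) ≤ c * (ε / c * ‖u - x‖) := by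
          exact mul_le_mul_of_nonneg_left this hc
      _ = ε * ‖u - x‖ := by field_simp
    
lemma mem_lnormal_of_fnormal {Ω : Set H} {x v : H} (hx : x ∈ Ω)
    (hv : v ∈ fnormal Ω x) : v ∈ lnormal Ω x :=
  ⟨fun _ => x, fun _ => v, fun _ => hx, fun _ => hv, tendsto_const_nhds, tendsto_const_nhds⟩

lemma zero_mem_tcone {Ω : Set H} {x : H} (hx : x ∈ Ω) : (0:H) ∈ tcone Ω x := by
  refine ⟨fun k : ℕ => 1 / ((k : ℝ) + 1), fun _ => 0, fun k => by positivity,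
    tendsto_one_div_add_atTop_nhds_zero_nat, tendsto_const_nhds, fun k => by simpa using hx⟩

lemma smul_mem_tcone {Ω : Set H} {x w : H} {c : ℝ} (hc : 0 < c)
    (hw : w ∈ tcone Ω x) : c • w ∈ tcone Ω x := by
  obtain ⟨t, wk, htp, ht0, hwk, hmem⟩ := hw
  refine ⟨fun k => t k / c, fun k => c • wk k, fun k => div_pos (htp k) hc,
    by simpa using ht0.div_const c, hwk.const_smul c, fun k => ?_⟩
  have : (t k / c) • (c • wk k) = t k • wk k := by
    rw [smul_smul, div_mul_cancel₀]; exact ne_of_gt hc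
  rw [this]; exact hmem k

lemma isClosed_tcone (Ω : Set H) (x : H) : IsClosed (tcone Ω x) := by
  rw [← closure_subset_iff_isClosed]
  intro v hv
  obtain ⟨vs, hvs, hlim⟩ := mem_closure_iff_seq_limit.1 hv
  have key : ∀ m : ℕ, ∃ (s : ℝ) (z : H), 0 < s ∧ s < 1 / (m + 1) ∧
      ‖z - vs m‖ < 1 / (m + 1) ∧ x + s • z ∈ Ω := by
    intro m
    obtain ⟨t, wk, htp, ht0, hwk, hmem⟩ := hvs m
    have h1 : ∀ᶠ k in atTop, t k < 1 / (m + 1) :=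
      ht0.eventually_lt_const (by positivity)
    have h2 : ∀ᶠ k in atTop, ‖wk k - vs m‖ < 1 / (m + 1) := by
      have := Metric.tendsto_atTop.1 hwk (1 / (m + 1)) (by positivity)
      obtain ⟨N, hN⟩ := this
      exact eventually_atTop.2 ⟨N, fun k hk => by simpa [dist_eq_norm] using hN k hk⟩
    obtain ⟨k, hk1, hk2⟩ := (h1.and h2).exists
    exact ⟨t k, wk k, htp k, hk1, hk2, hmem k⟩
  choose s z hs1 hs2 hs3 hs4 using key
  refine ⟨s, z, hs1, ?_, ?_, hs4⟩
  · exact squeeze_zero (fun m => (hs1 m).le) (fun m => (hs2 m).le)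
      tendsto_one_div_add_atTop_nhds_zero_nat
  · rw [tendsto_iff_norm_sub_tendsto_zero] at hlim ⊢
    have hb : ∀ m, ‖z m - v‖ ≤ 1 / (m + 1) + ‖vs m - v‖ := fun m => by
      calc ‖z m - v‖ ≤ ‖z m - vs m‖ + ‖vs m - v‖ := norm_sub_le_norm_sub_add_norm_sub _ _ _
        _ ≤ 1 / (m + 1) + ‖vs m - v‖ := by linarith [hs3 m]
    refine squeeze_zero (fun m => norm_nonneg _) hb ?_
    simpa using tendsto_one_div_add_atTop_nhds_zero_nat.add hlim

lemma inner_nonpos_of_fnormal_tcone {Ω : Set H} {x v w : H}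
    (hv : v ∈ fnormal Ω x) (hw : w ∈ tcone Ω x) : (inner ℝ v w : ℝ) ≤ 0 := by
  obtain ⟨t, wk, htp, ht0, hwk, hmem⟩ := hw
  have key : ∀ ε > 0, (inner ℝ v w : ℝ) ≤ ε * (‖w‖ + 1) := by
    intro ε hε
    obtain ⟨δ, hδ, hb⟩ := hv ε hε
    have h1 : ∀ᶠ k in atTop, ‖wk k‖ < ‖w‖ + 1 := by
      have : Tendsto (fun k => ‖wk k‖) atTop (nhds ‖w‖) := hwk.norm
      exact this.eventually_lt_const (by linarith)
    have h2 : ∀ᶠ k in atTop, t k * (‖w‖ + 1) < δ := by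
      have : Tendsto (fun k => t k * (‖w‖ + 1)) atTop (nhds (0 * (‖w‖ + 1))) :=
        ht0.mul_const _
      rw [zero_mul] at this
      exact this.eventually_lt_const hδ
    have h3 : ∀ᶠ k in atTop, (inner ℝ v (wk k) : ℝ) ≤ ε * (‖w‖ + 1) := by
      filter_upwards [h1, h2] with k hk1 hk2
      have hmem' := hmem k
      have hnorm : ‖(x + t k • wk k) - x‖ = t k * ‖wk k‖ := by
        simp [norm_smul, abs_of_pos (htp k)]
      have hlt : ‖(x + t k • wk k) - x‖ < δ := by
        rw [hnorm]
        calc t k * ‖wk k‖ ≤ t k * (‖w‖ + 1) :=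
              mul_le_mul_of_nonneg_left hk1.le (htp k).le
          _ < δ := hk2
      have := hb _ hmem' hlt
      rw [hnorm] at this
      have hsimp : ((x + t k • wk k) - x) = t k • wk k := by abel
      rw [hsimp, real_inner_smul_right] at this
      have h4 : (inner ℝ v (wk k) : ℝ) ≤ ε * ‖wk k‖ := by
        have h5 := htp k
        nlinarith [this]
      calc (inner ℝ v (wk k) : ℝ) ≤ ε * ‖wk k‖ := h4
        _ ≤ ε * (‖w‖ + 1) := mul_le_mul_of_nonneg_left hk1.le hε.le
    have hcont : Tendsto (fun k => (inner ℝ v (wk k) : ℝ)) atTop (nhds (inner ℝ v w : ℝ)) :=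
      (continuous_inner.comp (Continuous.prodMk continuous_const continuous_id)).continuousAt.tendsto.comp hwk
    exact le_of_tendsto hcont h3
  by_contra hpos
  push_neg at hpos
  have hw1 : (0:ℝ) < ‖w‖ + 1 := by positivity
  have := key ((inner ℝ v w : ℝ) / (2 * (‖w‖ + 1))) (by positivity)
  rw [div_mul_eq_mul_div, mul_div_assoc] at this
  have heq : (‖w‖ + 1) / (2 * (‖w‖ + 1)) = 1 / 2 := by
    field_simp
  rw [heq] at this
  linarith

end Lemmas

section Lemmas2
variable {H : Type*} [NormedAddCommGroup H] [InnerProductSpace ℝ H]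

/-- Local nearest-point gives a Fréchet normal. -/
lemma fnormal_of_localmin {Ω : Set H} {y z : H} {δ₀ : ℝ} (hδ₀ : 0 < δ₀)
    (hmin : ∀ u ∈ Ω, ‖u - y‖ < δ₀ → dist z y ≤ dist z u) : z - y ∈ fnormal Ω y := by
  intro ε hε
  refine ⟨min (2 * ε) δ₀, lt_min (by positivity) hδ₀, fun u hu hd => ?_⟩
  have hd1 : ‖u - y‖ < 2 * ε := lt_of_lt_of_le hd (min_le_left _ _)
  have hd2 : ‖u - y‖ < δ₀ := lt_of_lt_of_le hd (min_le_right _ _)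
  have h := hmin u hu hd2
  rw [dist_eq_norm, dist_eq_norm] at h
  have hsq : ‖z - y‖ ^ 2 ≤ ‖z - u‖ ^ 2 := by
    have := norm_nonneg (z - y)
    nlinarith
  have hexp : ‖z - u‖ ^ 2 = ‖z - y‖ ^ 2 - 2 * (inner ℝ (z - y) (u - y) : ℝ) + ‖u - y‖ ^ 2 := by
    have h2 : z - u = (z - y) - (u - y) := by abel
    rw [h2, norm_sub_sq_real]
  have hkey : (inner ℝ (z - y) (u - y) : ℝ) ≤ ‖u - y‖ ^ 2 / 2 := by nlinarith
  calc (inner ℝ (z - y) (u - y) : ℝ) ≤ ‖u - y‖ ^ 2 / 2 := hkey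
    _ = ‖u - y‖ / 2 * ‖u - y‖ := by ring
    _ ≤ ε * ‖u - y‖ := by
        have := norm_nonneg (u - y)
        nlinarith

/-- Global nearest point gives a Fréchet normal. -/
lemma fnormal_of_nearest {Ω : Set H} {y z : H}
    (hmin : ∀ u ∈ Ω, dist z y ≤ dist z u) : z - y ∈ fnormal Ω y :=
  fnormal_of_localmin one_pos (fun u hu _ => hmin u hu)

variable [ProperSpace H]

/-- Locally, difference quotients eventually lie near the contingent cone. -/
lemma tcone_approx {Ω : Set H} {x : H} {t : ℕ → ℝ} (htp : ∀ k, 0 < t k)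
    (ht0 : Tendsto t atTop (nhds 0)) (R : ℝ) {ρ : ℝ} (hρ : 0 < ρ) :
    ∀ᶠ k in atTop, ∀ w : H, ‖w‖ ≤ R → x + t k • w ∈ Ω →
      ∃ p ∈ tcone Ω x, ‖w - p‖ ≤ ρ := by
  by_contra hc
  rw [Filter.not_eventually] at hc
  have hc' : ∃ᶠ k in atTop, ∃ w : H, ‖w‖ ≤ R ∧ x + t k • w ∈ Ω ∧
      ∀ p ∈ tcone Ω x, ρ < ‖w - p‖ := by
    apply hc.mono
    intro k hk
    push_neg at hk
    obtain ⟨w, h1, h2, h3⟩ := hk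
    exact ⟨w, h1, h2, h3⟩
  obtain ⟨φ, hφ, hP⟩ := Filter.extraction_of_frequently_atTop hc'
  choose w hw1 hw2 hw3 using hP
  have hball : ∀ j, w j ∈ closedBall (0 : H) R := fun j =>
    mem_closedBall_zero_iff.2 (hw1 j)
  obtain ⟨p, _, ψ, hψ, hlim⟩ :=
    tendsto_subseq_of_bounded isBounded_closedBall hball
  have hpT : p ∈ tcone Ω x := by
    refine ⟨t ∘ φ ∘ ψ, w ∘ ψ, fun j => htp _, ?_, hlim, fun j => hw2 _⟩
    exact ht0.comp ((hφ.comp hψ).tendsto_atTop)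
  have := hlim.eventually (Metric.ball_mem_nhds p hρ)
  obtain ⟨j, hj⟩ := this.exists
  have h1 := hw3 (ψ j) p hpT
  rw [show (w ∘ ψ) j = w (ψ j) from rfl, dist_eq_norm] at hj
  exact absurd hj (not_lt.2 h1.le)
end Lemmas2

section Lemmas3
variable {H : Type*} [NormedAddCommGroup H] [InnerProductSpace ℝ H] [ProperSpace H]

private lemma helper_quad {s B A : ℝ} (hs0 : 0 ≤ s) (hB : 0 ≤ B) (hA : 0 ≤ A)
    (h : s ^ 2 ≤ B * s + A) : s ≤ B + Real.sqrt A := by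
  by_contra hcon
  push_neg at hcon
  have h1 := Real.sq_sqrt hA
  have h2 := Real.sqrt_nonneg A
  nlinarith

private lemma helper_sqrt {a b : ℝ} (hb : 0 ≤ b) (h : a ≤ b ^ 2) : Real.sqrt a ≤ b := by
  calc Real.sqrt a ≤ Real.sqrt (b ^ 2) := Real.sqrt_le_sqrt h
    _ = b := Real.sqrt_sq hb

set_option maxHeartbeats 1000000 in
/-- Approximation step for the "normals to tangents" lemma. -/
lemma fnormal_tcone_approx {Ω : Set H} {x y u : H}
    (hΩ : IsClosed Ω) (hx : x ∈ Ω) (hy : y ∈ tcone Ω x)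
    (hu : u ∈ fnormal (tcone Ω x) y) {ε : ℝ} (hε : 0 < ε) :
    ∃ x' ∈ Ω, ∃ u' ∈ fnormal Ω x', ‖x' - x‖ ≤ ε ∧ ‖u' - u‖ ≤ ε := by
  have hεT : (0:ℝ) < ε / 8 := by positivity
  obtain ⟨δ₀, hδ₀, hT⟩ := hu (ε / 8) hεT
  set εT := ε / 8 with hεTdef
  set δ := min δ₀ 1 with hδdef
  have hδpos : 0 < δ := lt_min hδ₀ one_pos
  have hδle1 : δ ≤ 1 := min_le_right _ _
  have hδleδ₀ : δ ≤ δ₀ := min_le_left _ _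
  set r := δ / 2 with hrdef
  have hrpos : 0 < r := by positivity
  have hrle : r ≤ 1 / 2 := by rw [hrdef]; linarith
  set R := ‖y‖ + 2 with hRdef
  have hRpos : 0 < R := by positivity
  set M := ‖u‖ + 1 with hMdef
  have hMpos : 0 < M := by positivity
  set C₁ := 2 * εT + 2 * ‖u‖ + 1 with hC₁def
  have hC₁pos : 0 < C₁ := by positivity
  set σ := min (r / (2 * M)) (r / (8 * εT + 1)) with hσdef
  have hσpos : 0 < σ := lt_min (by positivity) (by positivity)
  have hσle2 : σ ≤ r / (8 * εT + 1) := min_le_right _ _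
  set γ := min (min (r / 4) (ε / R)) (min (r ^ 2 / (8 * σ * C₁)) (σ * ε ^ 2 / (8 * C₁)))
    with hγdef
  have hγpos : 0 < γ :=
    lt_min (lt_min (by positivity) (by positivity)) (lt_min (by positivity) (by positivity))
  have hγ1 : γ ≤ r / 4 := le_trans (min_le_left _ _) (min_le_left _ _)
  have hγ2 : γ ≤ ε / R := le_trans (min_le_left _ _) (min_le_right _ _)
  have hγ3 : γ ≤ r ^ 2 / (8 * σ * C₁) := le_trans (min_le_right _ _) (min_le_left _ _)
  have hγ4 : γ ≤ σ * ε ^ 2 / (8 * C₁) := le_trans (min_le_right _ _) (min_le_right _ _)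
  clear_value εT δ r R M C₁ σ γ
  -- extract a good index k
  obtain ⟨t, wk, htp, ht0, hwk, hmem⟩ := hy
  have E1 : ∀ᶠ k in atTop, t k < γ := ht0.eventually_lt_const hγpos
  have E2 : ∀ᶠ k in atTop, dist (wk k) y < γ :=
    (Metric.tendsto_nhds.1 hwk) γ hγpos
  have E3 := tcone_approx (Ω := Ω) (x := x) htp ht0 R hγpos
  obtain ⟨k, hk1, hk2, hk3⟩ := (E1.and (E2.and E3)).exists
  set τ := t k with hτdef
  have hτpos : 0 < τ := htp k
  have hτne : τ ≠ 0 := ne_of_gt hτpos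
  have hτγ : τ < γ := hk1
  have hwky : ‖wk k - y‖ < γ := by rw [← dist_eq_norm]; exact hk2
  set X := x + τ • wk k with hXdef
  have hXΩ : X ∈ Ω := hmem k
  -- the approximate normal inequality at X
  have key : ∀ z ∈ Ω, ‖z - X‖ ≤ r * τ →
      (inner ℝ u (z - X) : ℝ) ≤ εT * ‖z - X‖ + τ * γ * C₁ := by
    intro z hz hzr
    set w' := τ⁻¹ • (z - x) with hw'def
    have hτw' : τ • w' = z - x := smul_inv_smul₀ hτne _
    have hdiff : z - X = τ • (w' - wk k) := by
      rw [smul_sub, hτw', hXdef]; abel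
    have hnd : ‖z - X‖ = τ * ‖w' - wk k‖ := by
      rw [hdiff, norm_smul, Real.norm_eq_abs, abs_of_pos hτpos]
    have hwwk : ‖w' - wk k‖ ≤ r := by
      rw [hnd] at hzr
      have : τ * ‖w' - wk k‖ ≤ τ * r := by linarith
      exact le_of_mul_le_mul_left this hτpos
    have hw'R : ‖w'‖ ≤ R := by
      have hrep : w' = (w' - wk k) + (wk k - y) + y := by abel
      calc ‖w'‖ = ‖(w' - wk k) + (wk k - y) + y‖ := by rw [← hrep]
        _ ≤ ‖w' - wk k‖ + ‖wk k - y‖ + ‖y‖ := norm_add₃_le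
        _ ≤ r + γ + ‖y‖ := by linarith
        _ ≤ R := by rw [hRdef]; linarith
    have hzmem : x + τ • w' ∈ Ω := by rw [hτw']; simpa using hz
    obtain ⟨p, hpT, hpγ⟩ := hk3 w' hw'R hzmem
    have hpw' : ‖p - w'‖ ≤ γ := by rw [norm_sub_rev]; exact hpγ
    have hpyb : ‖p - y‖ ≤ ‖w' - wk k‖ + 2 * γ := by
      have hrep : p - y = (p - w') + (w' - wk k) + (wk k - y) := by abel
      calc ‖p - y‖ = ‖(p - w') + (w' - wk k) + (wk k - y)‖ := by rw [← hrep]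
        _ ≤ ‖p - w'‖ + ‖w' - wk k‖ + ‖wk k - y‖ := norm_add₃_le
        _ ≤ ‖w' - wk k‖ + 2 * γ := by linarith
    have hpy : ‖p - y‖ < δ₀ := by
      have h1 : ‖p - y‖ ≤ r + 2 * γ := by linarith
      have h2 : ‖p - y‖ < 2 * r := by linarith
      calc ‖p - y‖ < 2 * r := h2
        _ = δ := by rw [hrdef]; ring
        _ ≤ δ₀ := hδleδ₀
    have h1 : (inner ℝ u (p - y) : ℝ) ≤ εT * ‖p - y‖ := hT p hpT hpy
    have h2 : (inner ℝ u (w' - wk k) : ℝ) ≤ εT * ‖w' - wk k‖ + γ * C₁ := by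
      have hsplit : w' - wk k = (p - y) + ((w' - p) + (y - wk k)) := by abel
      have hin : (inner ℝ u (w' - wk k) : ℝ) =
          (inner ℝ u (p - y) : ℝ) + (inner ℝ u (w' - p) : ℝ) + (inner ℝ u (y - wk k) : ℝ) := by
        rw [hsplit, inner_add_right, inner_add_right]; ring
      have hb1 : (inner ℝ u (w' - p) : ℝ) ≤ ‖u‖ * γ := by
        calc (inner ℝ u (w' - p) : ℝ) ≤ ‖u‖ * ‖w' - p‖ := real_inner_le_norm _ _
          _ ≤ ‖u‖ * γ := mul_le_mul_of_nonneg_left hpγ (norm_nonneg u)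
      have hb2 : (inner ℝ u (y - wk k) : ℝ) ≤ ‖u‖ * γ := by
        calc (inner ℝ u (y - wk k) : ℝ) ≤ ‖u‖ * ‖y - wk k‖ := real_inner_le_norm _ _
          _ ≤ ‖u‖ * γ := by
              have : ‖y - wk k‖ ≤ γ := by rw [norm_sub_rev]; exact hwky.le
              exact mul_le_mul_of_nonneg_left this (norm_nonneg u)
      have h1' : (inner ℝ u (p - y) : ℝ) ≤ εT * (‖w' - wk k‖ + 2 * γ) := by
        calc (inner ℝ u (p - y) : ℝ) ≤ εT * ‖p - y‖ := h1
          _ ≤ εT * (‖w' - wk k‖ + 2 * γ) := mul_le_mul_of_nonneg_left hpyb hεT.le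
      rw [hin, hC₁def]
      linarith [h1', hb1, hb2, hγpos.le]
    calc (inner ℝ u (z - X) : ℝ) = τ * (inner ℝ u (w' - wk k) : ℝ) := by
          rw [hdiff, real_inner_smul_right]
      _ ≤ τ * (εT * ‖w' - wk k‖ + γ * C₁) := mul_le_mul_of_nonneg_left h2 hτpos.le
      _ = εT * (τ * ‖w' - wk k‖) + τ * γ * C₁ := by ring
      _ = εT * ‖z - X‖ + τ * γ * C₁ := by rw [hnd]
  -- projection construction
  set zs := X + (σ * τ) • u with hzsdef
  set K := Ω ∩ closedBall X (r * τ) with hKdef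
  have hKcomp : IsCompact K := (isCompact_closedBall X (r * τ)).inter_left hΩ
  have hKne : K.Nonempty := ⟨X, hXΩ, mem_closedBall_self (by positivity)⟩
  have hcont : Continuous fun z : H => dist zs z := continuous_const.dist continuous_id
  obtain ⟨q, hqK, hqmin⟩ := hKcomp.exists_isMinOn hKne hcont.continuousOn
  have hq1 : q ∈ Ω := hqK.1
  have hq2 : ‖q - X‖ ≤ r * τ := by
    have := hqK.2; rw [mem_closedBall, dist_eq_norm] at this; exact this
  set s := ‖q - X‖ with hsdef
  have hs0 : 0 ≤ s := norm_nonneg _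
  have hdzq : dist zs q ≤ dist zs X := isMinOn_iff.1 hqmin X ⟨hXΩ, mem_closedBall_self (by positivity)⟩
  have hστ : 0 < σ * τ := mul_pos hσpos hτpos
  have hs2 : s ^ 2 ≤ 2 * (σ * τ) * (εT * s + τ * γ * C₁) := by
    have hzsX : ‖zs - X‖ = σ * τ * ‖u‖ := by
      rw [hzsdef]
      have : X + (σ * τ) • u - X = (σ * τ) • u := by abel
      rw [this, norm_smul, Real.norm_eq_abs, abs_of_pos hστ]
    have hzsq : zs - q = (σ * τ) • u - (q - X) := by rw [hzsdef]; abel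
    have hexp : ‖zs - q‖ ^ 2 =
        (σ * τ * ‖u‖) ^ 2 - 2 * ((σ * τ) * (inner ℝ u (q - X) : ℝ)) + s ^ 2 := by
      rw [hzsq, norm_sub_sq_real, real_inner_smul_left, norm_smul, Real.norm_eq_abs,
        abs_of_pos hστ, hsdef]
    have hle : ‖zs - q‖ ^ 2 ≤ (σ * τ * ‖u‖) ^ 2 := by
      have h1 : ‖zs - q‖ ≤ σ * τ * ‖u‖ := by
        rw [← hzsX, ← dist_eq_norm, ← dist_eq_norm]; exact hdzq
      have h2 : 0 ≤ ‖zs - q‖ := norm_nonneg _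
      nlinarith
    have hkeyq : (inner ℝ u (q - X) : ℝ) ≤ εT * s + τ * γ * C₁ := key q hq1 hq2
    nlinarith
  -- bound s
  have hsqrtA : Real.sqrt (2 * (σ * τ) * (τ * γ * C₁)) ≤ τ * r / 2 := by
    apply helper_sqrt (by positivity)
    have hgs : γ * (8 * σ * C₁) ≤ r ^ 2 := by
      calc γ * (8 * σ * C₁) ≤ r ^ 2 / (8 * σ * C₁) * (8 * σ * C₁) :=
            mul_le_mul_of_nonneg_right hγ3 (by positivity)
        _ = r ^ 2 := div_mul_cancel₀ _ (by positivity)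
    linarith [mul_le_mul_of_nonneg_left hgs (show (0:ℝ) ≤ τ ^ 2 / 4 by positivity)]
  have hsle : s ≤ 2 * (σ * τ) * εT + Real.sqrt (2 * (σ * τ) * (τ * γ * C₁)) := by
    apply helper_quad hs0 (by positivity) (by positivity)
    linarith [hs2]
  have hσεT : 2 * σ * εT ≤ r / 4 := by
    have h8 : (0:ℝ) < 8 * εT + 1 := by positivity
    have hσ2' : σ * (8 * εT + 1) ≤ r := by
      rw [← le_div_iff₀ h8]; exact hσle2
    linarith [hσpos.le, hrpos.le]
  have hsint : s ≤ 3 / 4 * (r * τ) := by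
    have heq : 2 * (σ * τ) * εT = (2 * σ * εT) * τ := by ring
    rw [heq] at hsle
    have h1 : (2 * σ * εT) * τ ≤ r / 4 * τ := mul_le_mul_of_nonneg_right hσεT hτpos.le
    linarith [hsqrtA]
  -- the normal at q
  have hmargin : 0 < r * τ - s := by
    have : 0 < r * τ := mul_pos hrpos hτpos
    linarith
  have hnormal : zs - q ∈ fnormal Ω q := by
    apply fnormal_of_localmin hmargin
    intro z hz hzq
    apply isMinOn_iff.1 hqmin z
    refine ⟨hz, ?_⟩
    rw [mem_closedBall, dist_eq_norm]
    calc ‖z - X‖ ≤ ‖z - q‖ + ‖q - X‖ := norm_sub_le_norm_sub_add_norm_sub _ _ _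
      _ ≤ (r * τ - s) + s := by
          have := hzq.le
          linarith [hzq]
      _ = r * τ := by ring
  set u' := (σ * τ)⁻¹ • (zs - q) with hu'def
  have hu'normal : u' ∈ fnormal Ω q := fnormal_smul _ (by positivity) hnormal
  have hu'u : ‖u' - u‖ ≤ ε := by
    have hurep : u = (σ * τ)⁻¹ • (zs - X) := by
      rw [hzsdef]
      have : X + (σ * τ) • u - X = (σ * τ) • u := by abel
      rw [this, inv_smul_smul₀ (ne_of_gt hστ)]
    have hdiff : u' - u = (σ * τ)⁻¹ • (X - q) := by
      rw [hu'def, hurep, ← smul_sub]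
      congr 1
      abel
    have hnu : ‖u' - u‖ = s / (σ * τ) := by
      rw [hdiff, norm_smul, Real.norm_eq_abs, abs_of_pos (by positivity : (0:ℝ) < (σ * τ)⁻¹)]
      rw [norm_sub_rev]
      field_simp; rfl
    have hsqrtB : Real.sqrt (2 * (σ * τ) * (τ * γ * C₁)) ≤ σ * τ * ε / 2 := by
      apply helper_sqrt (by positivity)
      have h1 : γ * (8 * C₁) ≤ σ * ε ^ 2 := by
        calc γ * (8 * C₁) ≤ σ * ε ^ 2 / (8 * C₁) * (8 * C₁) :=
              mul_le_mul_of_nonneg_right hγ4 (by positivity)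
          _ = σ * ε ^ 2 := div_mul_cancel₀ _ (by positivity)
      linarith [mul_le_mul_of_nonneg_left h1 (show (0:ℝ) ≤ σ * τ ^ 2 / 4 by positivity)]
    rw [hnu, div_le_iff₀ hστ]
    have : 2 * (σ * τ) * εT = 2 * εT * (σ * τ) := by ring
    rw [this] at hsle
    have hεT4 : 2 * εT ≤ ε / 4 := by rw [hεTdef]; linarith
    have h2 : 2 * εT * (σ * τ) ≤ ε / 4 * (σ * τ) := mul_le_mul_of_nonneg_right hεT4 hστ.le
    calc s ≤ 2 * εT * (σ * τ) + Real.sqrt (2 * (σ * τ) * (τ * γ * C₁)) := hsle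
      _ ≤ ε / 4 * (σ * τ) + σ * τ * ε / 2 := by linarith
      _ ≤ ε * (σ * τ) := by linarith [mul_nonneg hε.le hστ.le]
  have hqx : ‖q - x‖ ≤ ε := by
    have h1 : ‖X - x‖ = τ * ‖wk k‖ := by
      rw [hXdef]
      have : x + τ • wk k - x = τ • wk k := by abel
      rw [this, norm_smul, Real.norm_eq_abs, abs_of_pos hτpos]
    have h2 : ‖wk k‖ ≤ ‖y‖ + γ := by
      have h3 : ‖wk k‖ - ‖y‖ ≤ ‖wk k - y‖ := norm_sub_norm_le _ _
      linarith
    have h4 : ‖q - x‖ ≤ ‖q - X‖ + ‖X - x‖ := norm_sub_le_norm_sub_add_norm_sub _ _ _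
    have h5 : τ * ‖wk k‖ ≤ τ * (‖y‖ + γ) := mul_le_mul_of_nonneg_left h2 hτpos.le
    have h6 : r * τ + τ * (‖y‖ + γ) ≤ τ * R := by
      rw [hRdef]
      have h6a : r * τ = τ * r := by ring
      have h6b : τ * (r + (‖y‖ + γ)) ≤ τ * (‖y‖ + 2) := by
        apply mul_le_mul_of_nonneg_left ?_ hτpos.le
        linarith
      linarith
    have h7 : τ * R ≤ γ * R := mul_le_mul_of_nonneg_right hτγ.le hRpos.le
    have h8 : γ * R ≤ ε := by
      have := (le_div_iff₀ hRpos).1 hγ2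
      linarith
    rw [h1] at h4
    linarith
  exact ⟨q, hq1, u', hu'normal, hqx, hu'u⟩

end Lemmas3

section Lemmas4
variable {H : Type*} [NormedAddCommGroup H] [InnerProductSpace ℝ H] [ProperSpace H]

/-- Fréchet normals to the contingent cone are limiting normals to the set. -/
lemma fnormal_tcone_subset_lnormal {Ω : Set H} {x : H}
    (hΩ : IsClosed Ω) (hx : x ∈ Ω) {y u : H} (hy : y ∈ tcone Ω x)
    (hu : u ∈ fnormal (tcone Ω x) y) : u ∈ lnormal Ω x := by
  have key : ∀ j : ℕ, ∃ x' ∈ Ω, ∃ u' ∈ fnormal Ω x',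
      ‖x' - x‖ ≤ 1 / ((j : ℝ) + 1) ∧ ‖u' - u‖ ≤ 1 / ((j : ℝ) + 1) :=
    fun j => fnormal_tcone_approx hΩ hx hy hu (by positivity)
  choose xk hxk uk huk hb using key
  refine ⟨xk, uk, hxk, huk, ?_, ?_⟩
  · rw [tendsto_iff_norm_sub_tendsto_zero]
    exact squeeze_zero (fun j => norm_nonneg _) (fun j => (hb j).1)
      tendsto_one_div_add_atTop_nhds_zero_nat
  · rw [tendsto_iff_norm_sub_tendsto_zero]
    exact squeeze_zero (fun j => norm_nonneg _) (fun j => (hb j).2)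
      tendsto_one_div_add_atTop_nhds_zero_nat

/-- A minimizer of a quadratic `a‖x‖² - ⟨b, x⟩` satisfies `b = 2a x₀`. -/
private lemma helper_quadmin {a : ℝ} (ha : 0 < a) {b x₀ : H}
    (hmin : ∀ x : H, a * ‖x₀‖ ^ 2 - (inner ℝ b x₀ : ℝ) ≤ a * ‖x‖ ^ 2 - (inner ℝ b x : ℝ)) :
    b = (2 * a) • x₀ := by
  set w := b - (2 * a) • x₀ with hw
  set t := 1 / (2 * a) with htdef
  have htpos : 0 < t := by positivity
  have ht : a * t = 1 / 2 := by rw [htdef]; field_simp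
  have hx := hmin (x₀ + t • w)
  have hn : ‖x₀ + t • w‖ ^ 2
      = ‖x₀‖ ^ 2 + 2 * (t * (inner ℝ x₀ w : ℝ)) + t ^ 2 * ‖w‖ ^ 2 := by
    rw [norm_add_sq_real, real_inner_smul_right, norm_smul, Real.norm_eq_abs,
      abs_of_pos htpos]
    ring
  have hbi : (inner ℝ b (x₀ + t • w) : ℝ) = (inner ℝ b x₀ : ℝ) + t * (inner ℝ b w : ℝ) := by
    rw [inner_add_right, real_inner_smul_right]
  have hbw : (inner ℝ b w : ℝ) = 2 * a * (inner ℝ x₀ w : ℝ) + ‖w‖ ^ 2 := by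
    have h1 : (inner ℝ w w : ℝ) = (inner ℝ b w : ℝ) - 2 * a * (inner ℝ x₀ w : ℝ) := by
      rw [hw, inner_sub_left, real_inner_smul_left, real_inner_comm w x₀]
    have h2 : (inner ℝ w w : ℝ) = ‖w‖ ^ 2 := real_inner_self_eq_norm_sq w
    linarith
  have h3 : 0 ≤ 2 * (a * t * (inner ℝ x₀ w : ℝ)) + a * t ^ 2 * ‖w‖ ^ 2
      - t * (inner ℝ b w : ℝ) := by
    rw [hn] at hx
    rw [hbi] at hx
    nlinarith [hx]
  have h4 : a * t ^ 2 * ‖w‖ ^ 2 = 1 / 2 * t * ‖w‖ ^ 2 := by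
    have : a * t ^ 2 = a * t * t := by ring
    rw [this, ht]
  have h5 : t * (inner ℝ b w : ℝ) = 2 * (a * t * (inner ℝ x₀ w : ℝ)) + t * ‖w‖ ^ 2 := by
    rw [hbw]; ring
  have h6 : 0 ≤ - (1 / 2) * t * ‖w‖ ^ 2 := by
    rw [h4, h5] at h3
    linarith
  have h7 : ‖w‖ ^ 2 ≤ 0 := by nlinarith [htpos]
  have h8 : w = 0 := by
    have := sq_nonneg ‖w‖
    have h9 : ‖w‖ ^ 2 = 0 := le_antisymm h7 this
    have : ‖w‖ = 0 := by
      nlinarith [norm_nonneg w]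
    exact norm_eq_zero.1 this
  have : b - (2 * a) • x₀ = 0 := h8
  rw [sub_eq_zero] at this
  exact this
end Lemmas4

section Lemmas5
variable {H : Type*} [NormedAddCommGroup H] [InnerProductSpace ℝ H] [ProperSpace H]

set_option maxHeartbeats 1000000 in
/-- The penalized minimization step. -/
lemma aux_min (Λ : ℕ → Set H) (hcl : ∀ i, IsClosed (Λ i)) (h0 : ∀ i, (0:H) ∈ Λ i)
    (N : ℕ → Set H) (hN : ∀ i, ∀ y ∈ Λ i, ∀ u ∈ fnormal (Λ i) y, u ∈ N i)
    (v : H) (k : ℕ) :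
    ∃ x₀ : H, ‖x₀‖ ≤ 2 * ‖v‖ ∧ ‖x₀‖ ^ 2 / 2 ≤ (inner ℝ v x₀ : ℝ) ∧
      (∀ i ≤ k, (1/2:ℝ) ^ i * infDist x₀ (Λ i) ^ 2 ≤ (inner ℝ v x₀ : ℝ) / (k + 1)) ∧
      v - x₀ ∈ finSums N := by
  classical
  set c : ℕ → ℝ := fun i => (1/2:ℝ) ^ i with hcdef
  have hcpos : ∀ i, 0 < c i := fun i => by rw [hcdef]; positivity
  set K : ℝ := (k : ℝ) + 1 with hKdef
  have hKpos : 0 < K := by rw [hKdef]; positivity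
  set g : H → ℝ := fun x => -(inner ℝ v x : ℝ) + ‖x‖ ^ 2 / 2 +
    K * ∑ i ∈ Finset.range (k+1), c i * infDist x (Λ i) ^ 2 with hgdef
  clear_value c K g
  have hgval : ∀ x : H, g x = -(inner ℝ v x : ℝ) + ‖x‖ ^ 2 / 2 +
      K * ∑ i ∈ Finset.range (k+1), c i * infDist x (Λ i) ^ 2 := fun x => by rw [hgdef]
  have hgc : Continuous g := by
    rw [hgdef]
    apply Continuous.add
    apply Continuous.add
    · exact (Continuous.inner continuous_const continuous_id).neg
    · exact (continuous_norm.pow 2).div_const 2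
    · exact continuous_const.mul (continuous_finset_sum _
        (fun i _ => continuous_const.mul ((Metric.continuous_infDist_pt (Λ i)).pow 2)))
  have hg0 : g 0 = 0 := by
    rw [hgval 0]
    simp only [inner_zero_right, norm_zero]
    have : ∀ i ∈ Finset.range (k+1), c i * infDist (0:H) (Λ i) ^ 2 = 0 := by
      intro i _
      rw [infDist_zero_of_mem (h0 i)]
      ring
    rw [Finset.sum_eq_zero this]
    ring
  -- minimizer over a ball
  have hballne : (closedBall (0:H) (2*‖v‖+1)).Nonempty :=
    ⟨0, mem_closedBall_self (by positivity)⟩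
  obtain ⟨x₀, hx₀B, hminOn⟩ := (isCompact_closedBall (0:H) (2*‖v‖+1)).exists_isMinOn
    hballne hgc.continuousOn
  have hpen : ∀ x : H, 0 ≤ ∑ i ∈ Finset.range (k+1), c i * infDist x (Λ i) ^ 2 :=
    fun x => Finset.sum_nonneg (fun i _ => by
      have := (hcpos i).le
      have := infDist_nonneg (s := Λ i) (x := x)
      positivity)
  have hglobal : ∀ x : H, g x₀ ≤ g x := by
    intro x
    by_cases hx : x ∈ closedBall (0:H) (2*‖v‖+1)
    · exact isMinOn_iff.1 hminOn x hx
    · have hxn : 2*‖v‖+1 < ‖x‖ := by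
        rw [mem_closedBall, dist_zero_right] at hx
        linarith [not_le.1 hx]
      have h1 : g x₀ ≤ 0 := by
        have := isMinOn_iff.1 hminOn 0 (mem_closedBall_self (by positivity))
        rw [hg0] at this
        exact this
      have h2 : 0 < g x := by
        have hi : (inner ℝ v x : ℝ) ≤ ‖v‖ * ‖x‖ := real_inner_le_norm v x
        have hp := hpen x
        have hKp := mul_nonneg hKpos.le hp
        have hvx : 0 ≤ ‖v‖ := norm_nonneg v
        rw [hgval x]
        nlinarith [hi, hKp, hxn, hvx]
      linarith
  have hgx₀0 : g x₀ ≤ 0 := by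
    have := hglobal 0
    rw [hg0] at this
    exact this
  -- projections
  have hproj : ∀ i, ∃ y ∈ Λ i, infDist x₀ (Λ i) = dist x₀ y :=
    fun i => (hcl i).exists_infDist_eq_dist ⟨0, h0 i⟩ x₀
  choose y hyΛ hyd using hproj
  -- the quadratic data
  set a : ℝ := 1/2 + K * ∑ i ∈ Finset.range (k+1), c i with hadef
  have hcsum : 0 ≤ ∑ i ∈ Finset.range (k+1), c i :=
    Finset.sum_nonneg (fun i _ => (hcpos i).le)
  have ha : 0 < a := by rw [hadef]; positivity
  set b : H := v + (2*K) • (∑ i ∈ Finset.range (k+1), c i • y i) with hbdef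
  set C : ℝ := K * ∑ i ∈ Finset.range (k+1), c i * ‖y i‖ ^ 2 with hCdef
  clear_value a b C
  have hident : ∀ x : H, a * ‖x‖ ^ 2 - (inner ℝ b x : ℝ) + C =
      -(inner ℝ v x : ℝ) + ‖x‖ ^ 2 / 2 +
        K * ∑ i ∈ Finset.range (k+1), c i * ‖x - y i‖ ^ 2 := by
    intro x
    have hsum : ∑ i ∈ Finset.range (k+1), c i * ‖x - y i‖ ^ 2
        = (∑ i ∈ Finset.range (k+1), c i) * ‖x‖ ^ 2
          - 2 * ∑ i ∈ Finset.range (k+1), c i * (inner ℝ (y i) x : ℝ)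
          + ∑ i ∈ Finset.range (k+1), c i * ‖y i‖ ^ 2 := by
      have hterm : ∀ i ∈ Finset.range (k+1), c i * ‖x - y i‖ ^ 2
          = c i * ‖x‖ ^ 2 - 2 * (c i * (inner ℝ (y i) x : ℝ)) + c i * ‖y i‖ ^ 2 := by
        intro i _
        rw [norm_sub_sq_real, real_inner_comm x (y i)]
        ring
      rw [Finset.sum_congr rfl hterm, Finset.sum_add_distrib, Finset.sum_sub_distrib,
        ← Finset.sum_mul, Finset.mul_sum]
    have hinner : (inner ℝ b x : ℝ) = (inner ℝ v x : ℝ) +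
        2 * K * ∑ i ∈ Finset.range (k+1), c i * (inner ℝ (y i) x : ℝ) := by
      rw [hbdef, inner_add_left, real_inner_smul_left, sum_inner]
      have : ∀ i ∈ Finset.range (k+1),
          (inner ℝ (c i • y i) x : ℝ) = c i * (inner ℝ (y i) x : ℝ) := by
        intro i _
        exact real_inner_smul_left _ _ _
      rw [Finset.sum_congr rfl this]
    rw [hsum, hinner, hadef, hCdef]
    ring
  have hquad : ∀ x : H, a * ‖x₀‖ ^ 2 - (inner ℝ b x₀ : ℝ) ≤ a * ‖x‖ ^ 2 - (inner ℝ b x : ℝ) := by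
    intro x
    have hub : g x ≤ a * ‖x‖ ^ 2 - (inner ℝ b x : ℝ) + C := by
      rw [hident x, hgval x]
      have hsumle : ∑ i ∈ Finset.range (k+1), c i * infDist x (Λ i) ^ 2
          ≤ ∑ i ∈ Finset.range (k+1), c i * ‖x - y i‖ ^ 2 := by
        apply Finset.sum_le_sum
        intro i _
        apply mul_le_mul_of_nonneg_left ?_ (hcpos i).le
        have hle : infDist x (Λ i) ≤ ‖x - y i‖ := by
          rw [← dist_eq_norm]
          exact infDist_le_dist_of_mem (hyΛ i)
        have h1 : (0:ℝ) ≤ infDist x (Λ i) := infDist_nonneg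
        nlinarith
      have := mul_le_mul_of_nonneg_left hsumle hKpos.le
      linarith
    have heq : g x₀ = a * ‖x₀‖ ^ 2 - (inner ℝ b x₀ : ℝ) + C := by
      rw [hident x₀, hgval x₀]
      have hsc : ∀ i ∈ Finset.range (k+1),
          c i * infDist x₀ (Λ i) ^ 2 = c i * ‖x₀ - y i‖ ^ 2 := by
        intro i _
        rw [hyd i, dist_eq_norm]
      rw [Finset.sum_congr rfl hsc]
    have := hglobal x
    linarith
  have hb := helper_quadmin ha hquad
  -- extract the representation
  have hvrep : v - x₀ = ∑ i ∈ Finset.range (k+1), (2 * K * c i) • (x₀ - y i) := by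
    have e1 : ∑ i ∈ Finset.range (k+1), (2 * K * c i) • (x₀ - y i)
        = (2 * K * ∑ i ∈ Finset.range (k+1), c i) • x₀
          - (2*K) • ∑ i ∈ Finset.range (k+1), c i • y i := by
      have e1a : ∀ i ∈ Finset.range (k+1), (2 * K * c i) • (x₀ - y i)
          = (2 * K * c i) • x₀ - (2*K) • (c i • y i) := by
        intro i _
        rw [smul_sub, smul_smul]
      rw [Finset.sum_congr rfl e1a, Finset.sum_sub_distrib, ← Finset.sum_smul,
        ← Finset.mul_sum, ← Finset.smul_sum]
    have e2 : (2*a) • x₀ = x₀ + (2 * K * ∑ i ∈ Finset.range (k+1), c i) • x₀ := by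
      have h2a : 2*a = 1 + 2 * K * ∑ i ∈ Finset.range (k+1), c i := by
        rw [hadef]; ring
      rw [h2a, add_smul, one_smul]
    have e3 : v = (2*a) • x₀ - (2*K) • ∑ i ∈ Finset.range (k+1), c i • y i := by
      have : v + (2*K) • (∑ i ∈ Finset.range (k+1), c i • y i) = (2*a) • x₀ := by
        rw [← hbdef]; exact hb
      exact eq_sub_of_add_eq this
    rw [e1, e3, e2]
    abel
  -- membership in finSums
  have hmemN : ∀ i ∈ Finset.range (k+1), (2 * K * c i) • (x₀ - y i) ∈ N i := by
    intro i _
    apply hN i (y i) (hyΛ i)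
    apply fnormal_smul _ (mul_nonneg (mul_nonneg (by norm_num) hKpos.le) (hcpos i).le)
    have hnear : ∀ z ∈ Λ i, dist x₀ (y i) ≤ dist x₀ z := by
      intro z hz
      rw [← hyd i]
      exact infDist_le_dist_of_mem hz
    exact fnormal_of_nearest hnear
  have hfin : v - x₀ ∈ finSums N :=
    ⟨Finset.range (k+1), fun i => (2 * K * c i) • (x₀ - y i), hmemN, hvrep⟩
  -- estimates
  have hgx₀' := hgx₀0
  rw [hgval x₀] at hgx₀'
  have hPn := hpen x₀
  have hKP : 0 ≤ K * ∑ i ∈ Finset.range (k+1), c i * infDist x₀ (Λ i) ^ 2 :=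
    mul_nonneg hKpos.le hPn
  have hin2 : ‖x₀‖ ^ 2 / 2 ≤ (inner ℝ v x₀ : ℝ) := by linarith
  have hKPle : K * (∑ i ∈ Finset.range (k+1), c i * infDist x₀ (Λ i) ^ 2)
      ≤ (inner ℝ v x₀ : ℝ) := by
    have := sq_nonneg ‖x₀‖
    linarith
  have hPle : (∑ i ∈ Finset.range (k+1), c i * infDist x₀ (Λ i) ^ 2)
      ≤ (inner ℝ v x₀ : ℝ) / K := by
    rw [le_div_iff₀ hKpos]
    linarith [hKPle]
  have hterm : ∀ i ≤ k, (1/2:ℝ) ^ i * infDist x₀ (Λ i) ^ 2 ≤ (inner ℝ v x₀ : ℝ) / K := by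
    intro i hi
    have hmem : i ∈ Finset.range (k+1) := Finset.mem_range.2 (Nat.lt_succ_of_le hi)
    have hsingle : c i * infDist x₀ (Λ i) ^ 2
        ≤ ∑ j ∈ Finset.range (k+1), c j * infDist x₀ (Λ j) ^ 2 :=
      Finset.single_le_sum (f := fun j => c j * infDist x₀ (Λ j) ^ 2)
        (fun j _ => mul_nonneg (hcpos j).le (by positivity)) hmem
    calc (1/2:ℝ) ^ i * infDist x₀ (Λ i) ^ 2 = c i * infDist x₀ (Λ i) ^ 2 := by
          simp only [hcdef]
      _ ≤ ∑ j ∈ Finset.range (k+1), c j * infDist x₀ (Λ j) ^ 2 := hsingle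
      _ ≤ (inner ℝ v x₀ : ℝ) / K := hPle
  have hnorm : ‖x₀‖ ≤ 2 * ‖v‖ := by
    by_contra hcon
    push_neg at hcon
    have h1 : (inner ℝ v x₀ : ℝ) ≤ ‖v‖ * ‖x₀‖ := real_inner_le_norm v x₀
    nlinarith [norm_nonneg v, norm_nonneg x₀]
  exact ⟨x₀, hnorm, hin2, hterm, hfin⟩
end Lemmas5

set_option maxHeartbeats 1000000 in
/-- **Generalized normals to countable set intersections** (Theorem 3.12).  Under the
CHIP and the normal qualification condition, every Fréchet normal to `⋂ Ωᵢ` at `x̄` is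
in the closure of the set of finite sums of limiting normals to the `Ωᵢ`; under the
normal closedness condition the closure operation can be omitted. -/
theorem generalized_normals_to_countable_intersections {n : ℕ}
    (Ω : ℕ → Set (EuclideanSpace ℝ (Fin n))) (xb : EuclideanSpace ℝ (Fin n))
    (hcl : ∀ i, IsClosed (Ω i)) (hxb : ∀ i, xb ∈ Ω i)
    (hCHIP : tcone (⋂ i, Ω i) xb = ⋂ i, tcone (Ω i) xb)
    (hNQC : ∀ xs : ℕ → EuclideanSpace ℝ (Fin n),
      (∀ i, xs i ∈ lnormal (Ω i) xb) →
      Tendsto (fun m => ∑ i ∈ Finset.range m, xs i) atTop (nhds 0) →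
      ∀ i, xs i = 0) :
    fnormal (⋂ i, Ω i) xb ⊆ closure (finSums fun i => lnormal (Ω i) xb) ∧
    (IsClosed (finSums fun i => lnormal (Ω i) xb) →
      fnormal (⋂ i, Ω i) xb ⊆ finSums fun i => lnormal (Ω i) xb) := by
  have hmain : fnormal (⋂ i, Ω i) xb ⊆ closure (finSums fun i => lnormal (Ω i) xb) := by
    intro v hv
    have hpolar : ∀ w ∈ ⋂ i, tcone (Ω i) xb, (inner ℝ v w : ℝ) ≤ 0 := by
      intro w hw
      rw [← hCHIP] at hw
      exact inner_nonpos_of_fnormal_tcone hv hw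
    set Λ : ℕ → Set (EuclideanSpace ℝ (Fin n)) := fun i => tcone (Ω i) xb with hΛdef
    have hΛcl : ∀ i, IsClosed (Λ i) := fun i => isClosed_tcone _ _
    have hΛ0 : ∀ i, (0 : EuclideanSpace ℝ (Fin n)) ∈ Λ i := fun i => zero_mem_tcone (hxb i)
    have hNsub : ∀ i, ∀ y ∈ Λ i, ∀ u ∈ fnormal (Λ i) y, u ∈ lnormal (Ω i) xb :=
      fun i y hy u hu => fnormal_tcone_subset_lnormal (hcl i) (hxb i) hy hu
    have hex : ∀ k : ℕ, ∃ x₀ : EuclideanSpace ℝ (Fin n), ‖x₀‖ ≤ 2 * ‖v‖ ∧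
        ‖x₀‖ ^ 2 / 2 ≤ (inner ℝ v x₀ : ℝ) ∧
        (∀ i ≤ k, (1/2:ℝ) ^ i * infDist x₀ (Λ i) ^ 2 ≤ (inner ℝ v x₀ : ℝ) / (k + 1)) ∧
        v - x₀ ∈ finSums (fun i => lnormal (Ω i) xb) :=
      fun k => aux_min Λ hΛcl hΛ0 _ hNsub v k
    choose xk hxk1 hxk2 hxk3 hxk4 using hex
    have hball : ∀ k, xk k ∈ closedBall (0 : EuclideanSpace ℝ (Fin n)) (2 * ‖v‖) :=
      fun k => mem_closedBall_zero_iff.2 (hxk1 k)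
    obtain ⟨xh, _, φ, hφ, hlim⟩ := tendsto_subseq_of_bounded isBounded_closedBall hball
    have hinlim : Tendsto (fun j => (inner ℝ v ((xk ∘ φ) j) : ℝ)) atTop
        (nhds (inner ℝ v xh : ℝ)) := tendsto_const_nhds.inner hlim
    have hnormlim : Tendsto (fun j => ‖(xk ∘ φ) j‖) atTop (nhds ‖xh‖) := hlim.norm
    have hIub : ∀ j, (inner ℝ v (xk (φ j)) : ℝ) ≤ 2 * ‖v‖ * ‖v‖ := by
      intro j
      calc (inner ℝ v (xk (φ j)) : ℝ) ≤ ‖v‖ * ‖xk (φ j)‖ := real_inner_le_norm _ _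
        _ ≤ ‖v‖ * (2 * ‖v‖) := mul_le_mul_of_nonneg_left (hxk1 (φ j)) (norm_nonneg v)
        _ = 2 * ‖v‖ * ‖v‖ := by ring
    have hIlb : ∀ j, 0 ≤ (inner ℝ v (xk (φ j)) : ℝ) := by
      intro j
      have h1 := hxk2 (φ j)
      have h2 := sq_nonneg ‖xk (φ j)‖
      linarith
    -- xh lies in every tangent cone
    have hmemΛ : ∀ i, xh ∈ Λ i := by
      intro i
      have hdist : Tendsto (fun j => infDist ((xk ∘ φ) j) (Λ i) ^ 2) atTop
          (nhds (infDist xh (Λ i) ^ 2)) :=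
        (((Metric.continuous_infDist_pt (Λ i)).tendsto xh).comp hlim).pow 2
      have hB : Tendsto (fun j : ℕ => ((2:ℝ) ^ i * (2 * ‖v‖ * ‖v‖)) / ((j:ℝ) + 1))
          atTop (nhds 0) := by
        have h := tendsto_one_div_add_atTop_nhds_zero_nat.const_mul
          ((2:ℝ) ^ i * (2 * ‖v‖ * ‖v‖))
        simpa [mul_one_div, div_eq_mul_inv] using h
      have hub : ∀ j, i ≤ j → infDist ((xk ∘ φ) j) (Λ i) ^ 2
          ≤ ((2:ℝ) ^ i * (2 * ‖v‖ * ‖v‖)) / ((j:ℝ) + 1) := by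
        intro j hij
        have hiφ : i ≤ φ j := le_trans hij hφ.le_apply
        have h3 := hxk3 (φ j) i hiφ
        have hjφ : ((j:ℝ) + 1) ≤ ((φ j : ℝ) + 1) := by
          have h4 : j ≤ φ j := hφ.le_apply
          have h5 : (j:ℝ) ≤ (φ j : ℝ) := by exact_mod_cast h4
          linarith
        have hjpos : (0:ℝ) < (j:ℝ) + 1 := by positivity
        have hpow : (2:ℝ) ^ i * (1/2:ℝ) ^ i = 1 := by
          rw [← mul_pow]; norm_num
        have h6 : infDist (xk (φ j)) (Λ i) ^ 2
            ≤ (2:ℝ) ^ i * ((inner ℝ v (xk (φ j)) : ℝ) / ((φ j : ℝ) + 1)) := by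
          have h7 := mul_le_mul_of_nonneg_left h3 (by positivity : (0:ℝ) ≤ (2:ℝ) ^ i)
          calc infDist (xk (φ j)) (Λ i) ^ 2
              = ((2:ℝ) ^ i * (1/2:ℝ) ^ i) * infDist (xk (φ j)) (Λ i) ^ 2 := by
                rw [hpow, one_mul]
            _ = (2:ℝ) ^ i * ((1/2:ℝ) ^ i * infDist (xk (φ j)) (Λ i) ^ 2) := by ring
            _ ≤ (2:ℝ) ^ i * ((inner ℝ v (xk (φ j)) : ℝ) / ((φ j : ℝ) + 1)) := h7
        have h9 : ((2:ℝ) ^ i * (inner ℝ v (xk (φ j)) : ℝ)) / ((φ j : ℝ) + 1)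
            ≤ ((2:ℝ) ^ i * (2 * ‖v‖ * ‖v‖)) / ((j:ℝ) + 1) := by
          apply div_le_div₀ (by positivity) ?_ hjpos hjφ
          exact mul_le_mul_of_nonneg_left (hIub j) (by positivity)
        calc infDist ((xk ∘ φ) j) (Λ i) ^ 2
            ≤ (2:ℝ) ^ i * ((inner ℝ v (xk (φ j)) : ℝ) / ((φ j : ℝ) + 1)) := h6
          _ = ((2:ℝ) ^ i * (inner ℝ v (xk (φ j)) : ℝ)) / ((φ j : ℝ) + 1) := by
              rw [mul_div_assoc]
          _ ≤ ((2:ℝ) ^ i * (2 * ‖v‖ * ‖v‖)) / ((j:ℝ) + 1) := h9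
      have hsq : Tendsto (fun j => infDist ((xk ∘ φ) j) (Λ i) ^ 2) atTop (nhds 0) := by
        apply squeeze_zero' (Filter.Eventually.of_forall (fun j => by positivity))
          ?_ hB
        exact Filter.eventually_atTop.2 ⟨i, hub⟩
      have heq0 : infDist xh (Λ i) ^ 2 = 0 := tendsto_nhds_unique hdist hsq
      have hd0 : infDist xh (Λ i) = 0 := by
        have := sq_nonneg (infDist xh (Λ i))
        nlinarith [heq0]
      exact ((hΛcl i).mem_iff_infDist_zero ⟨0, hΛ0 i⟩).2 hd0
    have hxhmem : xh ∈ ⋂ i, tcone (Ω i) xb := mem_iInter.2 hmemΛ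
    have hneg : (inner ℝ v xh : ℝ) ≤ 0 := hpolar xh hxhmem
    have hpos : ‖xh‖ ^ 2 / 2 ≤ (inner ℝ v xh : ℝ) :=
      le_of_tendsto_of_tendsto' ((hnormlim.pow 2).div_const 2) hinlim
        (fun j => hxk2 (φ j))
    have hxh0 : xh = 0 := by
      have h1 : ‖xh‖ ^ 2 ≤ 0 := by linarith
      have h2 := sq_nonneg ‖xh‖
      have h3 : ‖xh‖ = 0 := by nlinarith [norm_nonneg xh]
      exact norm_eq_zero.1 h3
    have hvt : Tendsto (fun j => v - (xk ∘ φ) j) atTop (nhds v) := by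
      have h := (tendsto_const_nhds (x := v) (f := atTop)).sub hlim
      rwa [hxh0, sub_zero] at h
    exact mem_closure_of_tendsto hvt
      (Filter.Eventually.of_forall (fun j => hxk4 (φ j)))
  refine ⟨hmain, fun hclosed v hv => ?_⟩
  have h := hmain hv
  rwa [hclosed.closure_eq] at h
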